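/- (At-the-money Gram–Charlier price.) For all reals ν, B, μ3, μ4, ν·B·∫_0^∞ z·g₁(z) dz = (1/√(2π))·ν·B·(1 − (μ4 − 3)/24); in particular the at-the-money Gram–Charlier price depends on the kurtosis parameter μ4 but not on the skewness parameter μ3. -/

import Mathlib

open MeasureTheory Real Set Filter Topology

/-- The standard normal density `φ(z) = (2π)^(−1/2) exp(−z²/2)`. -/
noncomputable def φ (z : ℝ) : ℝ := (Real.sqrt (2 * Real.pi))⁻¹ * Real.exp (-z ^ 2 / 2)

/-- The Hermite polynomials defined by `H n z * φ z = φ⁽ⁿ⁾ z`. -/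
noncomputable def H (n : ℕ) (z : ℝ) : ℝ := iteratedDeriv n φ z / φ z

/-- The fourth-order Gram–Charlier density with skewness `μ3` and kurtosis `μ4`. -/
noncomputable def g₁ (μ3 μ4 z : ℝ) : ℝ :=
  φ z * (1 - μ3 / 6 * H 3 z + (μ4 - 3) / 24 * H 4 z)

lemma φ_pos (z : ℝ) : 0 < φ z := by
  apply mul_pos
  · rw [inv_pos]
    exact Real.sqrt_pos.mpr (by positivity)
  · exact Real.exp_pos _

lemma hasDerivAt_φ (z : ℝ) : HasDerivAt φ (-z * φ z) z := by
  have h1 : HasDerivAt (fun z : ℝ => -z ^ 2 / 2) (-z) z := by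
    have := (hasDerivAt_pow 2 z).neg.div_const 2
    refine this.congr_deriv ?_
    push_cast
    ring
  have h2 := h1.exp.const_mul ((Real.sqrt (2 * Real.pi))⁻¹)
  have h3 : -z * φ z = (Real.sqrt (2 * Real.pi))⁻¹ * (Real.exp (-z ^ 2 / 2) * -z) := by
    unfold φ; ring
  rw [h3]
  exact h2

lemma hd {p : ℝ → ℝ} {w z : ℝ} (hp : HasDerivAt p w z) :
    HasDerivAt (fun z => p z * φ z) ((w - z * p z) * φ z) z := by
  have := hp.mul (hasDerivAt_φ z)
  refine this.congr_deriv ?_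
  ring

lemma id1 : iteratedDeriv 1 φ = fun z => -z * φ z := by
  funext z
  rw [iteratedDeriv_one]
  exact (hasDerivAt_φ z).deriv

lemma id2 : iteratedDeriv 2 φ = fun z => (z ^ 2 - 1) * φ z := by
  funext z
  rw [show iteratedDeriv 2 φ = deriv (iteratedDeriv 1 φ) from iteratedDeriv_succ, id1]
  have h : HasDerivAt (fun z : ℝ => -z * φ z) ((-1 - z * -z) * φ z) z :=
    hd (hasDerivAt_id z).neg
  rw [h.deriv]
  ring

lemma id3 : iteratedDeriv 3 φ = fun z => (3 * z - z ^ 3) * φ z := by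
  funext z
  rw [show iteratedDeriv 3 φ = deriv (iteratedDeriv 2 φ) from iteratedDeriv_succ, id2]
  have hp : HasDerivAt (fun z : ℝ => z ^ 2 - 1) (2 * z) z := by
    have := (hasDerivAt_pow 2 z).sub_const 1
    refine this.congr_deriv ?_
    push_cast; ring
  have h := hd hp
  rw [h.deriv]
  ring

lemma id4 : iteratedDeriv 4 φ = fun z => (z ^ 4 - 6 * z ^ 2 + 3) * φ z := by
  funext z
  rw [show iteratedDeriv 4 φ = deriv (iteratedDeriv 3 φ) from iteratedDeriv_succ, id3]
  have hp : HasDerivAt (fun z : ℝ => 3 * z - z ^ 3) (3 - 3 * z ^ 2) z := by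
    have := ((hasDerivAt_id z).const_mul 3).sub (hasDerivAt_pow 3 z)
    refine this.congr_deriv ?_
    push_cast; ring
  have h := hd hp
  rw [h.deriv]
  ring

lemma H3 (z : ℝ) : H 3 z = 3 * z - z ^ 3 := by
  unfold H
  rw [id3]
  field_simp [ne_of_gt (φ_pos z)]

lemma H4 (z : ℝ) : H 4 z = z ^ 4 - 6 * z ^ 2 + 3 := by
  unfold H
  rw [id4]
  field_simp [ne_of_gt (φ_pos z)]

lemma mono_int (k : ℕ) :
    IntegrableOn (fun x : ℝ => x ^ k * Real.exp (-x ^ 2 / 2)) (Set.Ioi 0) := by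
  have h := integrableOn_rpow_mul_exp_neg_mul_sq (b := (1 : ℝ) / 2) (by norm_num)
    (s := (k : ℝ)) (lt_of_lt_of_le neg_one_lt_zero (Nat.cast_nonneg k))
  apply h.congr_fun ?_ measurableSet_Ioi
  intro x hx
  show x ^ (k : ℝ) * Real.exp (-(1 / 2) * x ^ 2) = x ^ k * Real.exp (-x ^ 2 / 2)
  rw [Real.rpow_natCast, show -(1 / 2 : ℝ) * x ^ 2 = -x ^ 2 / 2 by ring]

lemma tendk (k : ℕ) :
    Tendsto (fun z : ℝ => z ^ k * Real.exp (-z ^ 2 / 2)) atTop (𝓝 0) := by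
  have h1 : Tendsto (fun z : ℝ => z ^ 2 / 2) atTop atTop :=
    Tendsto.atTop_div_const (by norm_num) (tendsto_pow_atTop two_ne_zero)
  have h2 : Tendsto (fun z : ℝ => (z ^ 2 / 2) ^ k * Real.exp (-(z ^ 2 / 2)) * 2 ^ k)
      atTop (𝓝 0) := by
    have := ((tendsto_pow_mul_exp_neg_atTop_nhds_zero k).comp h1).mul_const ((2 : ℝ) ^ k)
    simpa using this
  apply squeeze_zero' ?_ ?_ h2
  · filter_upwards [eventually_ge_atTop (0 : ℝ)] with z hz
    positivity
  · filter_upwards [eventually_ge_atTop (1 : ℝ)] with z hz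
    have h3 : z ^ k ≤ z ^ (2 * k) := pow_le_pow_right₀ hz (by omega)
    have h4 : z ^ k * Real.exp (-z ^ 2 / 2) ≤ z ^ (2 * k) * Real.exp (-z ^ 2 / 2) :=
      mul_le_mul_of_nonneg_right h3 (Real.exp_pos _).le
    have h5 : (z ^ 2 / 2) ^ k * Real.exp (-(z ^ 2 / 2)) * 2 ^ k
        = z ^ (2 * k) * Real.exp (-z ^ 2 / 2) := by
      rw [div_pow, pow_mul, show -(z ^ 2 / 2) = -z ^ 2 / 2 by ring]
      field_simp
    rw [h5]
    exact h4

/-- At-the-money Gram–Charlier price: it depends on the kurtosis parameter `μ4`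
but not on the skewness parameter `μ3`. -/
theorem gram_charlier_atm_price (ν B μ3 μ4 : ℝ) :
    ν * B * (∫ z in Set.Ioi (0 : ℝ), z * g₁ μ3 μ4 z) =
      1 / Real.sqrt (2 * Real.pi) * ν * B * (1 - (μ4 - 3) / 24) := by
  set c : ℝ := (Real.sqrt (2 * Real.pi))⁻¹ with hc
  set F : ℝ → ℝ := fun z =>
    (-1 - μ3 / 6 * z ^ 3 + (μ4 - 3) / 24 * (-z ^ 4 + 2 * z ^ 2 + 1)) * φ z with hF
  have hq : ∀ z : ℝ, HasDerivAt
      (fun z : ℝ => -1 - μ3 / 6 * z ^ 3 + (μ4 - 3) / 24 * (-z ^ 4 + 2 * z ^ 2 + 1))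
      (0 - μ3 / 6 * (3 * z ^ 2) + (μ4 - 3) / 24 * (-(4 * z ^ 3) + 2 * (2 * z))) z := by
    intro z
    have h3 : HasDerivAt (fun z : ℝ => z ^ 3) (3 * z ^ 2) z := by
      simpa using hasDerivAt_pow 3 z
    have h4 : HasDerivAt (fun z : ℝ => z ^ 4) (4 * z ^ 3) z := by
      simpa using hasDerivAt_pow 4 z
    have h2 : HasDerivAt (fun z : ℝ => z ^ 2) (2 * z) z := by
      simpa using hasDerivAt_pow 2 z
    exact ((hasDerivAt_const z (-1 : ℝ)).sub (HasDerivAt.const_mul (μ3 / 6) h3)).add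
      (HasDerivAt.const_mul ((μ4 - 3) / 24)
        ((h4.neg.add (HasDerivAt.const_mul 2 h2)).add_const 1))
  have hFd : ∀ z : ℝ, HasDerivAt F (z * g₁ μ3 μ4 z) z := by
    intro z
    have h := hd (hq z)
    have he : z * g₁ μ3 μ4 z =
        (0 - μ3 / 6 * (3 * z ^ 2) + (μ4 - 3) / 24 * (-(4 * z ^ 3) + 2 * (2 * z)) -
          z * (-1 - μ3 / 6 * z ^ 3 + (μ4 - 3) / 24 * (-z ^ 4 + 2 * z ^ 2 + 1))) * φ z := by
      simp only [g₁, H3, H4]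
      ring
    rw [hF, he]
    exact h
  have hi : IntegrableOn (fun z : ℝ => z * g₁ μ3 μ4 z) (Set.Ioi 0) := by
    have h := ((((mono_int 1).const_mul (c * (1 + (μ4 - 3) / 8))).add
        ((mono_int 2).const_mul (-(c * μ3 / 2)))).add
        ((mono_int 3).const_mul (-(c * (μ4 - 3) / 4)))).add
        (((mono_int 4).const_mul (c * μ3 / 6)).add
          ((mono_int 5).const_mul (c * (μ4 - 3) / 24)))
    apply IntegrableOn.congr_fun h ?_ measurableSet_Ioi
    intro x hx
    simp only [Pi.add_apply, g₁, φ, H3, H4, hc]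
    ring
  have hT : Tendsto F atTop (𝓝 0) := by
    have h := ((((tendk 0).const_mul (c * (-1 + (μ4 - 3) / 24))).add
        ((tendk 3).const_mul (-(c * μ3 / 6)))).add
        (((tendk 4).const_mul (-(c * (μ4 - 3) / 24))).add
          ((tendk 2).const_mul (c * (μ4 - 3) / 12))))
    have h0 : (c * (-1 + (μ4 - 3) / 24)) * 0 + (-(c * μ3 / 6)) * 0 +
        ((-(c * (μ4 - 3) / 24)) * 0 + (c * (μ4 - 3) / 12) * 0) = (0 : ℝ) := by ring
    rw [h0] at h
    apply h.congr
    intro z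
    simp only [hF, φ, hc]
    ring
  have key := integral_Ioi_of_hasDerivAt_of_tendsto' (fun x _ => hFd x) hi hT
  rw [key]
  have hF0 : F 0 = (-1 + (μ4 - 3) / 24) * c := by
    simp only [hF, φ, hc]
    norm_num
  rw [hF0, hc]
  rw [one_div]
  ring
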